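/- Let D and G be probability distributions on a finite set X such that G is (c,γ)-close to D, i.e., D(S) ≤ e^c·G(S) + γ for all S ⊆ X. Define D'(x) = min{D(x), e^c·G(x)}/(1−γ') and D''(x) = max{0, D(x) − e^c·G(x)}/γ', where γ' = ∑_x max{0, D(x) − e^c·G(x)}. Then γ' ∈ [0, γ], D = (1−γ')·D' + γ'·D'', and e^{-c}·D'(x) ≤ G(x)/(1−γ') for all x. -/
import Mathlib


/-- Decomposition lemma for a (c,γ)-close generator: with
`γ' = ∑_x max 0 (D x − e^c·G x)` (assumed in `(0,1)`), we have `γ' ∈ [0, γ]`,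
`D = (1−γ')·D' + γ'·D''` where `D' x = min (D x) (e^c·G x) / (1−γ')` and
`D'' x = max 0 (D x − e^c·G x) / γ'`, and `e^{-c}·D' x ≤ G x / (1−γ')`. -/
theorem stmt_12 {X : Type*} [Fintype X] (c γ : ℝ) (hc : 0 ≤ c) (hγ : 0 ≤ γ)
    (D G : X → ℝ) (hD0 : ∀ x, 0 ≤ D x) (hG0 : ∀ x, 0 ≤ G x)
    (hD1 : ∑ x, D x = 1) (hG1 : ∑ x, G x = 1)
    (hclose : ∀ S : Finset X, ∑ x ∈ S, D x ≤ Real.exp c * ∑ x ∈ S, G x + γ)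
    (hγ'pos : 0 < ∑ x, max 0 (D x - Real.exp c * G x))
    (hγ'lt : ∑ x, max 0 (D x - Real.exp c * G x) < 1) :
    (0 ≤ ∑ x, max 0 (D x - Real.exp c * G x) ∧
      ∑ x, max 0 (D x - Real.exp c * G x) ≤ γ) ∧
    (∀ x, D x =
      (1 - ∑ y, max 0 (D y - Real.exp c * G y)) *
        (min (D x) (Real.exp c * G x) / (1 - ∑ y, max 0 (D y - Real.exp c * G y))) +
      (∑ y, max 0 (D y - Real.exp c * G y)) *
        (max 0 (D x - Real.exp c * G x) / (∑ y, max 0 (D y - Real.exp c * G y)))) ∧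
    (∀ x, Real.exp (-c) *
        (min (D x) (Real.exp c * G x) / (1 - ∑ y, max 0 (D y - Real.exp c * G y)))
        ≤ G x / (1 - ∑ y, max 0 (D y - Real.exp c * G y))) := by
  set γ' := ∑ x, max 0 (D x - Real.exp c * G x) with hγ'def
  have h1 : 0 < 1 - γ' := by linarith
  refine ⟨⟨le_of_lt hγ'pos, ?_⟩, ?_, ?_⟩
  · -- γ' ≤ γ via S = {x | e^c G x < D x}
    classical
    set S := Finset.univ.filter (fun x => Real.exp c * G x < D x) with hS
    have hsum : γ' = ∑ x ∈ S, (D x - Real.exp c * G x) := by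
      rw [hγ'def, ← Finset.sum_filter_add_sum_filter_not Finset.univ
        (fun x => Real.exp c * G x < D x)]
      have h2 : ∑ x ∈ Finset.univ.filter (fun x => ¬ Real.exp c * G x < D x),
          max 0 (D x - Real.exp c * G x) = 0 := by
        apply Finset.sum_eq_zero
        intro x hx
        simp only [Finset.mem_filter, not_lt] at hx
        simp [max_eq_left, sub_nonpos.mpr hx.2]
      rw [h2, add_zero]
      apply Finset.sum_congr rfl
      intro x hx
      simp only [Finset.mem_filter] at hx
      exact max_eq_right (by linarith [hx.2])
    have := hclose S
    rw [hsum, Finset.sum_sub_distrib, Finset.mul_sum] at *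
    linarith [hclose S, (by rw [Finset.mul_sum] : Real.exp c * ∑ x ∈ S, G x = ∑ x ∈ S, Real.exp c * G x)]
  · intro x
    rw [mul_div_cancel₀ _ (ne_of_gt h1), mul_div_cancel₀ _ (ne_of_gt hγ'pos)]
    rcases le_total (D x) (Real.exp c * G x) with h | h
    · rw [min_eq_left h, max_eq_left (by linarith)]; ring
    · rw [min_eq_right h, max_eq_right (by linarith)]; ring
  · intro x
    rw [mul_div_assoc']
    gcongr
    calc Real.exp (-c) * min (D x) (Real.exp c * G x)
          ≤ Real.exp (-c) * (Real.exp c * G x) := by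
            apply mul_le_mul_of_nonneg_left (min_le_right _ _) (Real.exp_nonneg _)
        _ = G x := by rw [← mul_assoc, ← Real.exp_add]; simp
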